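/- (Regularity of degree languages) Let φ be a PQCL formula over Σ in which every atomic language L is a regular language (Language.IsRegular in Mathlib, identifying Set (List Σ) with Language Σ). Then for every k : ℕ, the language {w : List Σ | deg φ w = some k} is regular, and the language {w : List Σ | deg φ w = none} is regular. -/

import Mathlib

inductive PQCL (A : Type*) where
  | atom : Set (List A) → PQCL A
  | odis : PQCL A → PQCL A → PQCL A
  | pconj : PQCL A → PQCL A → PQCL A

namespace PQCL

variable {A : Type*}

/-- Optionality of a PQCL formula. -/
def opt : PQCL A → ℕ
  | atom _ => 1
  | odis φ₁ φ₂ => opt φ₁ + opt φ₂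
  | pconj φ₁ φ₂ => opt φ₁ * opt φ₂

open Classical in
/-- Satisfaction degree of a word w.r.t. a PQCL formula (`none` = does not satisfy). -/
noncomputable def deg : PQCL A → List A → Option ℕ
  | atom L, w => if w ∈ L then some 1 else none
  | odis φ₁ φ₂, w =>
    match deg φ₁ w with
    | some k => some k
    | none =>
      match deg φ₂ w with
      | some n => some (n + opt φ₁)
      | none => none
  | pconj φ₁ φ₂, w =>
    match deg φ₁ w, deg φ₂ w with
    | some i, some j => some (opt φ₂ * (i - 1) + j)
    | _, _ => none

/-- Dissatisfaction score of a word w.r.t. a PQCL formula. -/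
noncomputable def dscore (w : List A) (φ : PQCL A) : ℚ :=
  match deg φ w with
  | some k => (k : ℚ) / (opt φ + 1)
  | none => 1

/-- Reward associated with a word w.r.t. a PQCL formula. -/
noncomputable def reward (w : List A) (φ : PQCL A) : ℕ :=
  match deg φ w with
  | some k => opt φ - k + 1
  | none => 0

end PQCL

/-- All atomic languages of a PQCL formula are regular. -/
def AtomsRegular {A : Type*} : PQCL A → Prop
  | PQCL.atom L => Language.IsRegular (L : Language A)
  | PQCL.odis φ₁ φ₂ => AtomsRegular φ₁ ∧ AtomsRegular φ₂
  | PQCL.pconj φ₁ φ₂ => AtomsRegular φ₁ ∧ AtomsRegular φ₂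

section RegLemmas
variable {T : Type*}

theorem my_isRegular_compl {L : Language T} (h : L.IsRegular) :
    Language.IsRegular ({x | x ∉ L} : Language T) := by
  obtain ⟨σ, _, M, rfl⟩ := h
  refine ⟨σ, ‹_›, ⟨M.step, M.start, M.acceptᶜ⟩, ?_⟩
  ext x
  rw [DFA.mem_accepts]
  exact Iff.rfl

theorem my_isRegular_inter {L₁ L₂ : Language T} (h₁ : L₁.IsRegular) (h₂ : L₂.IsRegular) :
    Language.IsRegular ({x | x ∈ L₁ ∧ x ∈ L₂} : Language T) := by
  obtain ⟨σ₁, _, M₁, rfl⟩ := h₁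
  obtain ⟨σ₂, _, M₂, rfl⟩ := h₂
  refine ⟨σ₁ × σ₂, inferInstance,
    ⟨fun s a => (M₁.step s.1 a, M₂.step s.2 a), (M₁.start, M₂.start),
      {s | s.1 ∈ M₁.accept ∧ s.2 ∈ M₂.accept}⟩, ?_⟩
  have key : ∀ (x : List T) (s : σ₁ × σ₂),
      (DFA.mk (fun s a => (M₁.step s.1 a, M₂.step s.2 a)) (M₁.start, M₂.start)
        {s | s.1 ∈ M₁.accept ∧ s.2 ∈ M₂.accept}).evalFrom s x
        = (M₁.evalFrom s.1 x, M₂.evalFrom s.2 x) := by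
    intro x
    induction x with
    | nil => intro s; rfl
    | cons a x ih => intro s; exact ih _
  ext x
  rw [DFA.mem_accepts]
  show _ ∈ _ ↔ _
  rw [DFA.eval, key]
  exact Iff.rfl

theorem my_isRegular_empty : Language.IsRegular ({_x | False} : Language T) := by
  refine ⟨Unit, inferInstance, ⟨fun _ _ => (), (), ∅⟩, ?_⟩
  ext x
  rw [DFA.mem_accepts]
  exact iff_of_false (fun h => h) (fun h => h)

theorem my_isRegular_union {L₁ L₂ : Language T} (h₁ : L₁.IsRegular) (h₂ : L₂.IsRegular) :
    Language.IsRegular ({x | x ∈ L₁ ∨ x ∈ L₂} : Language T) := by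
  have := my_isRegular_compl (my_isRegular_inter (my_isRegular_compl h₁) (my_isRegular_compl h₂))
  convert this using 1
  refine iff_of_eq (congrArg Language.IsRegular ?_)
  ext x
  show (x ∈ L₁ ∨ x ∈ L₂) ↔ ¬(x ∉ L₁ ∧ x ∉ L₂)
  tauto

theorem my_isRegular_biUnion {ι : Type} (s : Finset ι) (f : ι → Language T)
    (h : ∀ i ∈ s, (f i).IsRegular) :
    Language.IsRegular ({x | ∃ i ∈ s, x ∈ f i} : Language T) := by
  classical
  induction s using Finset.induction_on with
  | empty =>
      have e : ({x | ∃ i ∈ (∅ : Finset ι), x ∈ f i} : Language T)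
          = ({_x | False} : Language T) := by
        ext x; simp
      rw [e]; exact my_isRegular_empty
  | @insert a s ha ih =>
      have key : ({x | ∃ i ∈ insert a s, x ∈ f i} : Language T)
          = {x | x ∈ f a ∨ x ∈ ({x | ∃ i ∈ s, x ∈ f i} : Language T)} := by
        ext x
        simp only [Set.mem_setOf_eq, Finset.mem_insert]
        constructor
        · rintro ⟨i, (rfl | hi), hx⟩
          · exact Or.inl hx
          · exact Or.inr ⟨i, hi, hx⟩
        · rintro (hx | ⟨i, hi, hx⟩)
          · exact ⟨a, Or.inl rfl, hx⟩
          · exact ⟨i, Or.inr hi, hx⟩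
      rw [key]
      exact my_isRegular_union (h a (Finset.mem_insert_self a s))
        (ih fun i hi => h i (Finset.mem_insert_of_mem hi))

end RegLemmas

theorem my_opt_pos {A : Type*} (φ : PQCL A) : 0 < φ.opt := by
  induction φ with
  | atom L => exact Nat.one_pos
  | odis φ₁ φ₂ ih₁ ih₂ => exact Nat.add_pos_left ih₁ _
  | pconj φ₁ φ₂ ih₁ ih₂ => exact Nat.mul_pos ih₁ ih₂

theorem deg_languages_regular' {A : Type*} (φ : PQCL A) (hreg : AtomsRegular φ) :
    (∀ k : ℕ, Language.IsRegular ({w : List A | PQCL.deg φ w = some k} : Language A)) ∧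
    Language.IsRegular ({w : List A | PQCL.deg φ w = none} : Language A) := by
  induction φ with
  | atom L =>
      have hL : Language.IsRegular (L : Language A) := hreg
      constructor
      · intro k
        by_cases hk : k = 1
        · subst hk
          have e : ({w : List A | PQCL.deg (PQCL.atom L) w = some 1} : Language A)
              = (L : Language A) := by
            ext w
            simp only [Set.mem_setOf_eq, PQCL.deg]
            split <;> simp_all
          rw [e]; exact hL
        · have e : ({w : List A | PQCL.deg (PQCL.atom L) w = some k} : Language A)
              = ({_x | False} : Language A) := by
            ext w
            simp only [Set.mem_setOf_eq, PQCL.deg]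
            split <;> simp_all <;> omega
          rw [e]; exact my_isRegular_empty
      · have e : ({w : List A | PQCL.deg (PQCL.atom L) w = none} : Language A)
            = ({x | x ∉ (L : Language A)} : Language A) := by
          ext w
          simp only [Set.mem_setOf_eq, PQCL.deg]
          split <;> simp_all
        rw [e]; exact my_isRegular_compl hL
  | odis φ₁ φ₂ ih₁ ih₂ =>
      obtain ⟨S₁, N₁⟩ := ih₁ hreg.1
      obtain ⟨S₂, N₂⟩ := ih₂ hreg.2
      constructor
      · intro k
        by_cases h : PQCL.opt φ₁ ≤ k
        · have e : ({w : List A | PQCL.deg (PQCL.odis φ₁ φ₂) w = some k} : Language A)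
              = {x | x ∈ ({w : List A | PQCL.deg φ₁ w = some k} : Language A) ∨
                  x ∈ ({w | w ∈ ({w : List A | PQCL.deg φ₁ w = none} : Language A) ∧
                    w ∈ ({w : List A | PQCL.deg φ₂ w = some (k - PQCL.opt φ₁)} : Language A)} :
                      Language A)} := by
            ext w
            simp only [Set.mem_setOf_eq, PQCL.deg]
            rcases hd₁ : PQCL.deg φ₁ w with _ | i <;>
              rcases hd₂ : PQCL.deg φ₂ w with _ | j <;>
              simp [hd₁, hd₂] <;> omega
          rw [e]
          exact my_isRegular_union (S₁ k) (my_isRegular_inter N₁ (S₂ (k - PQCL.opt φ₁)))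
        · have e : ({w : List A | PQCL.deg (PQCL.odis φ₁ φ₂) w = some k} : Language A)
              = ({w : List A | PQCL.deg φ₁ w = some k} : Language A) := by
            ext w
            simp only [Set.mem_setOf_eq, PQCL.deg]
            rcases hd₁ : PQCL.deg φ₁ w with _ | i <;>
              rcases hd₂ : PQCL.deg φ₂ w with _ | j <;>
              simp [hd₁, hd₂] <;> omega
          rw [e]; exact S₁ k
      · have e : ({w : List A | PQCL.deg (PQCL.odis φ₁ φ₂) w = none} : Language A)
            = {x | x ∈ ({w : List A | PQCL.deg φ₁ w = none} : Language A) ∧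
                x ∈ ({w : List A | PQCL.deg φ₂ w = none} : Language A)} := by
          ext w
          simp only [Set.mem_setOf_eq, PQCL.deg]
          rcases hd₁ : PQCL.deg φ₁ w with _ | i <;>
            rcases hd₂ : PQCL.deg φ₂ w with _ | j <;> simp [hd₁, hd₂]
        rw [e]; exact my_isRegular_inter N₁ N₂
  | pconj φ₁ φ₂ ih₁ ih₂ =>
      obtain ⟨S₁, N₁⟩ := ih₁ hreg.1
      obtain ⟨S₂, N₂⟩ := ih₂ hreg.2
      have hpos := my_opt_pos φ₂
      constructor
      · intro k
        classical
        set F : Finset (ℕ × ℕ) :=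
          ((Finset.range (k + 2)) ×ˢ Finset.range (k + 1)).filter
            (fun p => PQCL.opt φ₂ * (p.1 - 1) + p.2 = k) with hF
        set f : ℕ × ℕ → Language A := fun p =>
          ({w | w ∈ ({w : List A | PQCL.deg φ₁ w = some p.1} : Language A) ∧
                w ∈ ({w : List A | PQCL.deg φ₂ w = some p.2} : Language A)} : Language A) with hf'
        have hf : ∀ p ∈ F, Language.IsRegular (f p) :=
          fun p _ => my_isRegular_inter (S₁ p.1) (S₂ p.2)
        have e : ({w : List A | PQCL.deg (PQCL.pconj φ₁ φ₂) w = some k} : Language A)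
            = ({x | ∃ p ∈ F, x ∈ f p} : Language A) := by
          ext w
          simp only [Set.mem_setOf_eq, PQCL.deg, hF, hf', Finset.mem_filter,
            Finset.mem_product, Finset.mem_range]
          rcases hd₁ : PQCL.deg φ₁ w with _ | i
          · rcases hd₂ : PQCL.deg φ₂ w with _ | j <;>
              simp [hd₁, hd₂, Set.mem_setOf_eq] <;>
              exact fun x y _ _ _ hmem => nomatch hd₁.symm.trans hmem.1
          · rcases hd₂ : PQCL.deg φ₂ w with _ | j
            · simp [hd₁, hd₂, Set.mem_setOf_eq]
              exact fun x y _ _ _ hmem => nomatch hd₂.symm.trans hmem.2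
            · simp [hd₁, hd₂, Set.mem_setOf_eq]
              constructor
              · rintro rfl
                have hle : i - 1 ≤ PQCL.opt φ₂ * (i - 1) := Nat.le_mul_of_pos_left _ hpos
                exact ⟨i, j, ⟨⟨by omega, by omega⟩, rfl⟩, hd₁, hd₂⟩
              · rintro ⟨i', j', ⟨_, hk⟩, h1, h2⟩
                rw [hd₁, Option.some.injEq] at h1
                rw [hd₂, Option.some.injEq] at h2
                subst h1; subst h2
                exact hk
        rw [e]
        exact my_isRegular_biUnion F f hf
      · have e : ({w : List A | PQCL.deg (PQCL.pconj φ₁ φ₂) w = none} : Language A)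
            = {x | x ∈ ({w : List A | PQCL.deg φ₁ w = none} : Language A) ∨
                x ∈ ({w : List A | PQCL.deg φ₂ w = none} : Language A)} := by
          ext w
          simp only [Set.mem_setOf_eq, PQCL.deg]
          rcases hd₁ : PQCL.deg φ₁ w with _ | i <;>
            rcases hd₂ : PQCL.deg φ₂ w with _ | j <;> simp [hd₁, hd₂]
        rw [e]; exact my_isRegular_union N₁ N₂

theorem deg_languages_regular {A : Type*} (φ : PQCL A) (hreg : AtomsRegular φ) :
    (∀ k : ℕ, Language.IsRegular ({w : List A | PQCL.deg φ w = some k} : Language A)) ∧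
    Language.IsRegular ({w : List A | PQCL.deg φ w = none} : Language A) :=
  deg_languages_regular' φ hreg
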